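/- In a stratified space, every strictly ascending chain of strata is finite: there is no sequence f : ℕ → 𝒮 with f(n) ≤ f(n+1) and f(n) ≠ f(n+1) for all n. -/

import Mathlib

open Topology

/-- A stratification of a topological space `X`: a locally finite partition of `X`
into nonempty locally closed subsets (the strata) satisfying the frontier condition:
for all strata `S`, `T`, if `closure S ∩ T ≠ ∅` then `T ⊆ closure S`.
The incidence relation is `S' ≤ S ↔ S' ⊆ closure S`. -/
structure Stratification (X : Type*) [TopologicalSpace X] : Type _ where
  strata : Set (Set X)
  nonempty : ∀ S ∈ strata, S.Nonempty
  locallyClosed : ∀ S ∈ strata, IsLocallyClosed S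
  covers : ⋃₀ strata = Set.univ
  pairwiseDisjoint : strata.PairwiseDisjoint id
  locallyFinite : ∀ x : X, ∃ U ∈ nhds x, {S ∈ strata | (S ∩ U).Nonempty}.Finite
  frontier_cond : ∀ S ∈ strata, ∀ T ∈ strata, (closure S ∩ T).Nonempty → T ⊆ closure S

/-- Antisymmetry of the incidence relation. -/
lemma strat_antisymm {X : Type*} [TopologicalSpace X] (𝒮 : Stratification X)
    {S T : Set X} (hS : S ∈ 𝒮.strata) (hT : T ∈ 𝒮.strata)
    (hST : S ⊆ closure T) (hTS : T ⊆ closure S) : S = T := by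
  by_contra hne
  have hdisj : Disjoint S T := 𝒮.pairwiseDisjoint hS hT hne
  have hclosed : IsClosed (closure T \ T) := by
    have h := (isLocallyClosed_iff_isOpen_coborder.mp (𝒮.locallyClosed T hT))
    rw [coborder, isOpen_compl_iff] at h
    exact h
  have hSsub : S ⊆ closure T \ T := fun x hx =>
    ⟨hST hx, fun hxT => hdisj.ne_of_mem hx hxT rfl⟩
  have hclS : closure S ⊆ closure T \ T := hclosed.closure_subset_iff.mpr hSsub
  obtain ⟨t, ht⟩ := 𝒮.nonempty T hT
  exact (hclS (hTS ht)).2 ht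

/-- Every strictly ascending chain of strata is finite: there is no sequence of
strata `f : ℕ → 𝒮` with `f n ≤ f (n+1)` and `f n ≠ f (n+1)` for all `n`. -/
theorem no_infinite_ascending_chain {X : Type*} [TopologicalSpace X]
    (𝒮 : Stratification X) :
    ¬ ∃ f : ℕ → Set X, (∀ n, f n ∈ 𝒮.strata) ∧
      ∀ n, f n ⊆ closure (f (n + 1)) ∧ f n ≠ f (n + 1) := by
  rintro ⟨f, hf, hchain⟩
  have hmono : ∀ m n, m ≤ n → f m ⊆ closure (f n) := by
    intro m n h
    induction h with
    | refl => exact subset_closure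
    | step h ih =>
      exact ih.trans ((closure_mono (hchain _).1).trans closure_closure.subset)
  obtain ⟨x, hx⟩ := 𝒮.nonempty (f 0) (hf 0)
  obtain ⟨U, hU, hfin⟩ := 𝒮.locallyFinite x
  have hmem : ∀ n, f n ∈ {S ∈ 𝒮.strata | (S ∩ U).Nonempty} := by
    intro n
    refine ⟨hf n, ?_⟩
    have hx' : x ∈ closure (f n) := hmono 0 n (Nat.zero_le n) hx
    rw [mem_closure_iff_nhds] at hx'
    obtain ⟨y, hy1, hy2⟩ := hx' U hU
    exact ⟨y, hy2, hy1⟩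
  haveI := hfin.to_subtype
  obtain ⟨m, n, hmn, heq⟩ := Finite.exists_ne_map_eq_of_infinite
    (fun n => (⟨f n, hmem n⟩ : {S // S ∈ {S ∈ 𝒮.strata | (S ∩ U).Nonempty}}))
  have heq' : f m = f n := congrArg Subtype.val heq
  -- wlog m < n
  have key : ∀ a b : ℕ, a < b → f a = f b → False := by
    intro a b hab hfab
    apply (hchain a).2
    refine strat_antisymm 𝒮 (hf a) (hf (a + 1)) (hchain a).1 ?_
    have h1 : f (a + 1) ⊆ closure (f b) := hmono (a + 1) b hab
    rwa [← hfab] at h1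
  rcases Ne.lt_or_gt hmn with h | h
  · exact key m n h heq'
  · exact key n m h heq'.symm
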